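/- Let X, Y be Banach spaces, D ⊆ X convex, and F : D → Y Fréchet differentiable with derivative F'[f] at each f ∈ D. Assume there is a constant L̃ > 0 and a point f† ∈ D such that (1/L̃)‖h‖_X ≤ ‖F'[f†]h‖_Y ≤ L̃‖h‖_X for all h ∈ X, and for all f₁, f₂ ∈ D there exists a bounded linear operator R(f₁,f₂) on Y with F'[f₁] = R(f₁,f₂) ∘ F'[f₂] and ‖I − R(f₁,f₂)‖ ≤ 1/2. Then for all f₁, f₂ ∈ D: (1/(2L̃))‖f₁ − f₂‖_X ≤ ‖F(f₁) − F(f₂)‖_Y ≤ (3/2)L̃‖f₁ − f₂‖_X. -/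

import Mathlib

/-- two-sided Lipschitz estimate for nonlinear operators under the
range invariance condition and a two-sided bound on the derivative at f†. -/
theorem stmt1 {X Y : Type*} [NormedAddCommGroup X] [NormedSpace ℝ X] [CompleteSpace X]
    [NormedAddCommGroup Y] [NormedSpace ℝ Y] [CompleteSpace Y]
    (D : Set X) (hDconv : Convex ℝ D)
    (F : X → Y) (F' : X → X →L[ℝ] Y)
    (hF : ∀ f ∈ D, HasFDerivWithinAt F (F' f) D f)
    (L : ℝ) (hL : 0 < L) (fdag : X) (hfdag : fdag ∈ D)
    (hlow : ∀ h : X, (1 / L) * ‖h‖ ≤ ‖F' fdag h‖)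
    (hup : ∀ h : X, ‖F' fdag h‖ ≤ L * ‖h‖)
    (R : X → X → Y →L[ℝ] Y)
    (hR : ∀ f₁ ∈ D, ∀ f₂ ∈ D, F' f₁ = (R f₁ f₂).comp (F' f₂))
    (hRnorm : ∀ f₁ ∈ D, ∀ f₂ ∈ D, ‖ContinuousLinearMap.id ℝ Y - R f₁ f₂‖ ≤ 1 / 2) :
    ∀ f₁ ∈ D, ∀ f₂ ∈ D,
      (1 / (2 * L)) * ‖f₁ - f₂‖ ≤ ‖F f₁ - F f₂‖ ∧
      ‖F f₁ - F f₂‖ ≤ (3 / 2) * L * ‖f₁ - f₂‖ := by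
  intro f₁ hf₁ f₂ hf₂
  set h : X := f₁ - f₂ with hh
  set v : Y := F' fdag h with hv
  -- key pointwise bound: for x ∈ D, ‖F' x h - v‖ ≤ ‖v‖/2
  have key : ∀ x ∈ D, ‖F' x h - v‖ ≤ (1 / 2) * ‖v‖ := by
    intro x hx
    have hcomp := hR x hx fdag hfdag
    have : F' x h = R x fdag v := by rw [hcomp]; rfl
    rw [this]
    have : R x fdag v - v = -((ContinuousLinearMap.id ℝ Y - R x fdag) v) := by
      simp
    rw [show ‖R x fdag v - v‖ = ‖(ContinuousLinearMap.id ℝ Y - R x fdag) v‖ by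
      rw [this, norm_neg]]
    calc ‖(ContinuousLinearMap.id ℝ Y - R x fdag) v‖
        ≤ ‖ContinuousLinearMap.id ℝ Y - R x fdag‖ * ‖v‖ :=
          (ContinuousLinearMap.id ℝ Y - R x fdag).le_opNorm v
      _ ≤ (1 / 2) * ‖v‖ := by
          apply mul_le_mul_of_nonneg_right (hRnorm x hx fdag hfdag) (norm_nonneg v)
  -- segment parametrization
  set γ : ℝ → X := fun t => f₂ + t • h with hγ
  have hmem : ∀ t ∈ Set.Icc (0:ℝ) 1, γ t ∈ D := by
    intro t ht
    have : γ t = (1 - t) • f₂ + t • f₁ := by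
      simp only [hγ, hh]; module
    rw [this]
    exact hDconv hf₂ hf₁ (by linarith [ht.1, ht.2]) ht.1 (by linarith [ht.1, ht.2])
  set g : ℝ → Y := fun t => F (γ t) with hg
  set g' : ℝ → ℝ →L[ℝ] Y := fun t =>
    (ContinuousLinearMap.id ℝ ℝ).smulRight (F' (γ t) h) with hg'
  have hgd : ∀ t ∈ Set.Icc (0:ℝ) 1, HasFDerivWithinAt g (g' t) (Set.Icc 0 1) t := by
    intro t ht
    have hγd : HasFDerivWithinAt γ ((ContinuousLinearMap.id ℝ ℝ).smulRight h)
        (Set.Icc 0 1) t := by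
      apply HasFDerivAt.hasFDerivWithinAt
      have hd : HasDerivAt γ h t := by
        have : HasDerivAt (fun t : ℝ => t • h) ((1:ℝ) • h) t :=
          (hasDerivAt_id t).smul_const h
        simpa [hγ] using this.const_add f₂
      exact hd
    have := (hF (γ t) (hmem t ht)).comp t hγd (fun s hs => hmem s hs)
    have e : g' t = (F' (γ t)).comp ((ContinuousLinearMap.id ℝ ℝ).smulRight h) := by
      ext; simp [hg']
    rw [e]; exact this
  set φ : ℝ →L[ℝ] Y := (ContinuousLinearMap.id ℝ ℝ).smulRight v with hφ
  have bound : ∀ t ∈ Set.Icc (0:ℝ) 1, ‖g' t - φ‖ ≤ (1 / 2) * ‖v‖ := by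
    intro t ht
    have : g' t - φ = (ContinuousLinearMap.id ℝ ℝ).smulRight (F' (γ t) h - v) := by
      ext; simp [hg', hφ, smul_sub]
    rw [this]
    have : ‖(ContinuousLinearMap.id ℝ ℝ).smulRight (F' (γ t) h - v)‖
        = ‖F' (γ t) h - v‖ := by
      rw [ContinuousLinearMap.norm_smulRight_apply]
      simp
    rw [this]
    exact key (γ t) (hmem t ht)
  have mvt := (convex_Icc (0:ℝ) 1).norm_image_sub_le_of_norm_hasFDerivWithin_le'
    hgd bound (Set.left_mem_Icc.2 zero_le_one) (Set.right_mem_Icc.2 zero_le_one)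
  have hγ0 : γ 0 = f₂ := by simp [hγ]
  have hγ1 : γ 1 = f₁ := by simp [hγ, hh]
  have hφ1 : φ ((1:ℝ) - 0) = v := by simp [hφ]
  rw [hg] at mvt
  simp only [hγ0, hγ1, hφ1] at mvt
  -- mvt : ‖F f₁ - F f₂ - v‖ ≤ 1/2 * ‖v‖ * ‖(1:ℝ) - 0‖
  have mvt' : ‖F f₁ - F f₂ - v‖ ≤ (1 / 2) * ‖v‖ := by
    simpa using mvt
  have hlowv : (1 / L) * ‖h‖ ≤ ‖v‖ := hlow h
  have hupv : ‖v‖ ≤ L * ‖h‖ := hup h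
  constructor
  · have htri : ‖v‖ ≤ ‖F f₁ - F f₂‖ + ‖F f₁ - F f₂ - v‖ := by
      have heq : F f₁ - F f₂ - (F f₁ - F f₂ - v) = v := by abel
      have := norm_sub_le (F f₁ - F f₂) (F f₁ - F f₂ - v)
      rw [heq] at this
      exact this
    have hhalf : (1 / 2) * ‖v‖ ≤ ‖F f₁ - F f₂‖ := by linarith
    have h2 : (1 / (2 * L)) * ‖h‖ = (1 / 2) * ((1 / L) * ‖h‖) := by
      field_simp
    calc (1 / (2 * L)) * ‖h‖ = (1 / 2) * ((1 / L) * ‖h‖) := h2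
      _ ≤ (1 / 2) * ‖v‖ := by linarith
      _ ≤ ‖F f₁ - F f₂‖ := hhalf
  · have htri : ‖F f₁ - F f₂‖ ≤ ‖v‖ + ‖F f₁ - F f₂ - v‖ := by
      have heq : v + (F f₁ - F f₂ - v) = F f₁ - F f₂ := by abel
      have := norm_add_le v (F f₁ - F f₂ - v)
      rw [heq] at this
      exact this
    have : ‖F f₁ - F f₂‖ ≤ (3 / 2) * ‖v‖ := by linarith
    calc ‖F f₁ - F f₂‖ ≤ (3 / 2) * ‖v‖ := this
      _ ≤ (3 / 2) * (L * ‖h‖) := by linarith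
      _ = (3 / 2) * L * ‖h‖ := by ring
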